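/- For every prime p there exist rational numbers a and b such that the only solution (x, y, z) ∈ ℚ_p³ of z² = (a²+b²+1)·x² + (a²+a+1+b²)·y² is (0, 0, 0); that is, the quaternion algebra H_{a²+b²+1, a²+a+1+b²} is ramified at p. -/

import Mathlib

variable {p : ℕ} [Fact p.Prime]

lemma pdvd_iff_toZMod_eq_zero (z : ℤ_[p]) :
    (p : ℤ_[p]) ∣ z ↔ PadicInt.toZMod z = 0 := by
  rw [← Ideal.mem_span_singleton, ← PadicInt.maximalIdeal_eq_span_p,
    ← PadicInt.ker_toZMod, RingHom.mem_ker]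

/-- Descent in `ℤ_[p]`. -/
lemma descent_int (A B : ℤ)
    (hstep : ∀ z x y : ℤ_[p], z ^ 2 = (A : ℤ_[p]) * x ^ 2 + (B : ℤ_[p]) * y ^ 2 →
      (p : ℤ_[p]) ∣ z ∧ (p : ℤ_[p]) ∣ x ∧ (p : ℤ_[p]) ∣ y) :
    ∀ z x y : ℤ_[p], z ^ 2 = (A : ℤ_[p]) * x ^ 2 + (B : ℤ_[p]) * y ^ 2 →
      z = 0 ∧ x = 0 ∧ y = 0 := by
  have hp0 : (p : ℤ_[p]) ≠ 0 := PadicInt.prime_p.ne_zero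
  have hp2 : ((p : ℤ_[p]) ^ 2) ≠ 0 := pow_ne_zero _ hp0
  have claim : ∀ n : ℕ, ∀ z x y : ℤ_[p],
      z ^ 2 = (A : ℤ_[p]) * x ^ 2 + (B : ℤ_[p]) * y ^ 2 →
      (p : ℤ_[p]) ^ n ∣ z ∧ (p : ℤ_[p]) ^ n ∣ x ∧ (p : ℤ_[p]) ^ n ∣ y := by
    intro n
    induction n with
    | zero => intro z x y _; simp
    | succ n ih =>
      intro z x y h
      obtain ⟨⟨z', rfl⟩, ⟨x', rfl⟩, ⟨y', rfl⟩⟩ := hstep z x y h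
      have h' : z' ^ 2 = (A : ℤ_[p]) * x' ^ 2 + (B : ℤ_[p]) * y' ^ 2 := by
        apply mul_left_cancel₀ hp2
        linear_combination h
      obtain ⟨hz, hx, hy⟩ := ih z' x' y' h'
      refine ⟨?_, ?_, ?_⟩ <;>
        · rw [pow_succ']
          exact mul_dvd_mul_left _ ‹_›
  have zero_of : ∀ w : ℤ_[p], (∀ n : ℕ, (p : ℤ_[p]) ^ n ∣ w) → w = 0 := by
    intro w hw
    by_contra h0
    have hnorm : ∀ n : ℕ, ‖w‖ ≤ (p : ℝ) ^ (-(n : ℤ)) := fun n =>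
      (PadicInt.norm_le_pow_iff_mem_span_pow w n).mpr (Ideal.mem_span_singleton.mpr (hw n))
    have hpos : 0 < ‖w‖ := norm_pos_iff.mpr h0
    have h1 : (1 : ℝ) < p := by exact_mod_cast (Fact.out : p.Prime).one_lt
    obtain ⟨n, hn⟩ := exists_pow_lt_of_lt_one hpos
      (by rw [inv_lt_one_iff₀]; right; exact h1 : (p : ℝ)⁻¹ < 1)
    have : (p : ℝ) ^ (-(n : ℤ)) < ‖w‖ := by
      rwa [zpow_neg, zpow_natCast, ← inv_pow]
    exact absurd (hnorm n) (not_le.mpr this)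
  intro z x y h
  exact ⟨zero_of z fun n => (claim n z x y h).1, zero_of x fun n => (claim n z x y h).2.1,
    zero_of y fun n => (claim n z x y h).2.2⟩


lemma descent_rat (A B : ℤ)
    (hstep : ∀ z x y : ℤ_[p], z ^ 2 = (A : ℤ_[p]) * x ^ 2 + (B : ℤ_[p]) * y ^ 2 →
      (p : ℤ_[p]) ∣ z ∧ (p : ℤ_[p]) ∣ x ∧ (p : ℤ_[p]) ∣ y) :
    ∀ x y z : ℚ_[p], z ^ 2 = (A : ℚ_[p]) * x ^ 2 + (B : ℚ_[p]) * y ^ 2 →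
      x = 0 ∧ y = 0 ∧ z = 0 := by
  have descent := descent_int A B hstep
  intro x y z h
  have hp2 : (2 : ℕ) ≤ p := (Fact.out : p.Prime).two_le
  -- find k with norms ≤ p^k
  obtain ⟨k, hk⟩ := exists_nat_gt (max (max ‖z‖ ‖x‖) ‖y‖)
  have hkp : (k : ℝ) ≤ (p : ℝ) ^ k := by
    calc (k : ℝ) ≤ (2 : ℝ) ^ k := by exact_mod_cast (k.lt_two_pow_self).le
    _ ≤ (p : ℝ) ^ k := by
        apply pow_le_pow_left₀ (by norm_num)
        exact_mod_cast hp2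
  have hbound : ∀ w : ℚ_[p], ‖w‖ ≤ (p : ℝ) ^ k → ‖(p : ℚ_[p]) ^ k * w‖ ≤ 1 := by
    intro w hw
    rw [norm_mul, norm_pow, Padic.norm_p]
    calc (p : ℝ)⁻¹ ^ k * ‖w‖ ≤ (p : ℝ)⁻¹ ^ k * (p : ℝ) ^ k := by
          apply mul_le_mul_of_nonneg_left hw (by positivity)
    _ = 1 := by
        rw [inv_pow]
        field_simp
  have hZ : ‖(p : ℚ_[p]) ^ k * z‖ ≤ 1 := hbound z (le_trans (le_trans (le_max_left _ _) (le_max_left _ _)) (le_trans hk.le hkp))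
  have hX : ‖(p : ℚ_[p]) ^ k * x‖ ≤ 1 := hbound x (le_trans (le_trans (le_max_right _ _) (le_max_left _ _)) (le_trans hk.le hkp))
  have hY : ‖(p : ℚ_[p]) ^ k * y‖ ≤ 1 := hbound y (le_trans (le_max_right _ _) (le_trans hk.le hkp))
  set Z : ℤ_[p] := ⟨_, hZ⟩
  set X : ℤ_[p] := ⟨_, hX⟩
  set Y : ℤ_[p] := ⟨_, hY⟩
  have heq : Z ^ 2 = (A : ℤ_[p]) * X ^ 2 + (B : ℤ_[p]) * Y ^ 2 := by
    apply Subtype.ext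
    push_cast
    show ((p : ℚ_[p]) ^ k * z) ^ 2 = (A : ℚ_[p]) * ((p : ℚ_[p]) ^ k * x) ^ 2
      + (B : ℚ_[p]) * ((p : ℚ_[p]) ^ k * y) ^ 2
    rw [mul_pow, mul_pow, mul_pow, h]
    ring
  obtain ⟨hZ0, hX0, hY0⟩ := descent Z X Y heq
  have hpk : ((p : ℚ_[p]) ^ k) ≠ 0 := by
    apply pow_ne_zero
    exact_mod_cast (Fact.out : p.Prime).ne_zero
  refine ⟨?_, ?_, ?_⟩
  · have := congrArg (Subtype.val) hX0
    exact (mul_eq_zero.mp this).resolve_left hpk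
  · have := congrArg (Subtype.val) hY0
    exact (mul_eq_zero.mp this).resolve_left hpk
  · have := congrArg (Subtype.val) hZ0
    exact (mul_eq_zero.mp this).resolve_left hpk
lemma step1 (A B : ℤ) (hA : (p : ℤ) ∣ A) (hA2 : ¬ ((p : ℤ) ^ 2 ∣ A))
    (hB : ¬ IsSquare ((B : ZMod p))) :
    ∀ z x y : ℤ_[p], z ^ 2 = (A : ℤ_[p]) * x ^ 2 + (B : ℤ_[p]) * y ^ 2 →
      (p : ℤ_[p]) ∣ z ∧ (p : ℤ_[p]) ∣ x ∧ (p : ℤ_[p]) ∣ y := by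
  intro z x y h
  have hAbar : ((A : ZMod p)) = 0 := (ZMod.intCast_zmod_eq_zero_iff_dvd A p).mpr hA
  have hmod : (PadicInt.toZMod z) ^ 2 = (B : ZMod p) * (PadicInt.toZMod y) ^ 2 := by
    have := congrArg PadicInt.toZMod h
    simpa [map_add, map_mul, map_pow, map_intCast, hAbar] using this
  have hy0 : PadicInt.toZMod y = 0 := by
    by_contra hy
    apply hB
    refine ⟨PadicInt.toZMod z * (PadicInt.toZMod y)⁻¹, ?_⟩
    field_simp
    linear_combination -hmod
  have hz0 : PadicInt.toZMod z = 0 := by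
    rw [hy0] at hmod
    simpa [pow_eq_zero_iff] using hmod
  have hdz : (p : ℤ_[p]) ∣ z := (pdvd_iff_toZMod_eq_zero z).mpr hz0
  have hdy : (p : ℤ_[p]) ∣ y := (pdvd_iff_toZMod_eq_zero y).mpr hy0
  refine ⟨hdz, ?_, hdy⟩
  obtain ⟨z', rfl⟩ := hdz
  obtain ⟨y', rfl⟩ := hdy
  obtain ⟨A₁, hA₁eq⟩ := hA
  have hpA₁ : ¬ ((p : ℤ) ∣ A₁) := by
    rintro ⟨c, rfl⟩
    exact hA2 ⟨c, by rw [hA₁eq]; ring⟩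
  have hp0 : (p : ℤ_[p]) ≠ 0 := PadicInt.prime_p.ne_zero
  have hcast : (A : ℤ_[p]) = (p : ℤ_[p]) * (A₁ : ℤ_[p]) := by
    rw [hA₁eq]; push_cast; ring
  rw [hcast] at h
  have key : (p : ℤ_[p]) * ((A₁ : ℤ_[p]) * x ^ 2)
      = (p : ℤ_[p]) * ((p : ℤ_[p]) * (z' ^ 2 - (B : ℤ_[p]) * y' ^ 2)) := by
    linear_combination -h
  have key2 : (p : ℤ_[p]) ∣ (A₁ : ℤ_[p]) * x ^ 2 :=
    ⟨z' ^ 2 - (B : ℤ_[p]) * y' ^ 2, mul_left_cancel₀ hp0 key⟩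
  rcases PadicInt.prime_p.dvd_mul.mp key2 with hc | hc
  · exfalso
    apply hpA₁
    have := (PadicInt.pow_p_dvd_int_iff 1 A₁).mp (by simpa using hc)
    simpa using this
  · rcases (PadicInt.prime_p.dvd_mul.mp (by simpa [sq] using hc)) with h1 | h1 <;> exact h1

lemma step2 (A B A₁ B₁ : ℤ) (hA : A = p * A₁) (hB : B = p * B₁)
    (hns : ¬ IsSquare ((-(A₁ * B₁) : ZMod p))) :
    ∀ z x y : ℤ_[p], z ^ 2 = (A : ℤ_[p]) * x ^ 2 + (B : ℤ_[p]) * y ^ 2 →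
      (p : ℤ_[p]) ∣ z ∧ (p : ℤ_[p]) ∣ x ∧ (p : ℤ_[p]) ∣ y := by
  intro z x y h
  have hA₁0 : ((A₁ : ZMod p)) ≠ 0 := by
    intro h0
    exact hns ⟨0, by rw [h0]; ring⟩
  have hB₁0 : ((B₁ : ZMod p)) ≠ 0 := by
    intro h0
    exact hns ⟨0, by rw [h0]; ring⟩
  have hp0 : (p : ℤ_[p]) ≠ 0 := PadicInt.prime_p.ne_zero
  subst hA hB
  have h0A : ((p * A₁ : ℤ) : ZMod p) = 0 := by push_cast [ZMod.natCast_self]; ring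
  have h0B : ((p * B₁ : ℤ) : ZMod p) = 0 := by push_cast [ZMod.natCast_self]; ring
  have hz0 : PadicInt.toZMod z = 0 := by
    have := congrArg PadicInt.toZMod h
    simp only [map_add, map_mul, map_pow, map_intCast] at this
    rw [h0A, h0B] at this
    simpa [pow_eq_zero_iff] using this
  have hdz : (p : ℤ_[p]) ∣ z := (pdvd_iff_toZMod_eq_zero z).mpr hz0
  obtain ⟨z₁, rfl⟩ := hdz
  have heq2 : (p : ℤ_[p]) * z₁ ^ 2 = (A₁ : ℤ_[p]) * x ^ 2 + (B₁ : ℤ_[p]) * y ^ 2 := by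
    apply mul_left_cancel₀ hp0
    push_cast at h ⊢
    linear_combination h
  have hmod : (A₁ : ZMod p) * (PadicInt.toZMod x) ^ 2
      + (B₁ : ZMod p) * (PadicInt.toZMod y) ^ 2 = 0 := by
    have := congrArg PadicInt.toZMod heq2
    simp only [map_add, map_mul, map_pow, map_intCast, map_natCast,
      ZMod.natCast_self, zero_mul] at this
    simpa using this.symm
  have hx0 : PadicInt.toZMod x = 0 := by
    by_contra hx
    have hy : PadicInt.toZMod y ≠ 0 := by
      intro hy0
      rw [hy0] at hmod
      simp at hmod
      rcases hmod with h1 | h1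
      · exact hA₁0 h1
      · exact hx h1
    apply hns
    refine ⟨(A₁ : ZMod p) * PadicInt.toZMod x * (PadicInt.toZMod y)⁻¹, ?_⟩
    have hAx : (A₁ : ZMod p) * (PadicInt.toZMod x) ^ 2
        = -((B₁ : ZMod p) * (PadicInt.toZMod y) ^ 2) := by linear_combination hmod
    field_simp
    linear_combination -hAx
  have hy0 : PadicInt.toZMod y = 0 := by
    rw [hx0] at hmod
    simp at hmod
    rcases hmod with h1 | h1
    · exact absurd h1 hB₁0
    · exact h1
  exact ⟨Dvd.intro z₁ rfl, (pdvd_iff_toZMod_eq_zero x).mpr hx0,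
    (pdvd_iff_toZMod_eq_zero y).mpr hy0⟩
lemma step_p2 :
    ∀ z x y : ℤ_[2], z ^ 2 = ((2 : ℤ) : ℤ_[2]) * x ^ 2 + ((3 : ℤ) : ℤ_[2]) * y ^ 2 →
      ((2 : ℕ) : ℤ_[2]) ∣ z ∧ ((2 : ℕ) : ℤ_[2]) ∣ x ∧ ((2 : ℕ) : ℤ_[2]) ∣ y := by
  have hdvd : ∀ w : ℤ_[2],
      (ZMod.castHom (show (2:ℕ)^1 ∣ 2^5 by norm_num) (ZMod (2^1)))
        ((PadicInt.toZModPow 5) w) = 0 → ((2 : ℕ) : ℤ_[2]) ∣ w := by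
    intro w hw
    have hcomp := PadicInt.zmod_cast_comp_toZModPow (p := 2) 1 5 (by norm_num)
    have h1 : (PadicInt.toZModPow (p := 2) 1) w = 0 := by
      rw [← hcomp]
      exact hw
    have h2 : w ∈ RingHom.ker (PadicInt.toZModPow (p := 2) 1) := h1
    rw [PadicInt.ker_toZModPow, Ideal.mem_span_singleton, pow_one] at h2
    exact h2
  have D : ∀ u v w : ZMod (2^5), u ^ 2 = 2 * v ^ 2 + 3 * w ^ 2 →
      (ZMod.castHom (show (2:ℕ)^1 ∣ 2^5 by norm_num) (ZMod (2^1)) u = 0 ∧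
       ZMod.castHom (show (2:ℕ)^1 ∣ 2^5 by norm_num) (ZMod (2^1)) v = 0 ∧
       ZMod.castHom (show (2:ℕ)^1 ∣ 2^5 by norm_num) (ZMod (2^1)) w = 0) := by decide
  intro z x y h
  have h5 := congrArg (PadicInt.toZModPow 5) h
  simp only [map_add, map_mul, map_pow, map_intCast] at h5
  obtain ⟨h1, h2, h3⟩ := D _ _ _ (by exact_mod_cast h5)
  exact ⟨hdvd z h1, hdvd x h2, hdvd y h3⟩
lemma cast_val_int (c : ZMod p) : (((c.val : ℤ) : ZMod p)) = c := by
  push_cast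
  rw [ZMod.natCast_val, ZMod.cast_id]

lemma two_ne_zero_zmod (hp2 : p ≠ 2) : (2 : ZMod p) ≠ 0 := by
  have : ((2 : ℕ) : ZMod p) ≠ 0 := by
    rw [Ne, ZMod.natCast_eq_zero_iff]
    intro hd
    exact hp2 ((Nat.prime_dvd_prime_iff_eq Fact.out Nat.prime_two).mp hd)
  exact_mod_cast this

lemma construct3 (hp : p % 4 = 3) :
    ∃ a b : ℤ, (p : ℤ) ∣ (a ^ 2 + b ^ 2 + 1) ∧ ¬ ((p : ℤ) ^ 2 ∣ (a ^ 2 + b ^ 2 + 1)) ∧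
      ¬ IsSquare (((a ^ 2 + b ^ 2 + 1 + a : ℤ) : ZMod p)) := by
  have hp2 : p ≠ 2 := by omega
  have hns : ¬ IsSquare (-1 : ZMod p) := by
    intro h
    exact (ZMod.exists_sq_eq_neg_one_iff.mp h) hp
  obtain ⟨s, t, hst⟩ := ZMod.sq_add_sq p (-1 : ZMod p)
  have hs : s ≠ 0 := by
    rintro rfl
    exact hns ⟨t, by linear_combination -hst⟩
  have ht : t ≠ 0 := by
    rintro rfl
    exact hns ⟨s, by linear_combination -hst⟩
  obtain ⟨c, hcsq, hcc⟩ : ∃ c : ZMod p, ¬ IsSquare c ∧ c * c = s * s := by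
    by_cases hsq : IsSquare s
    · refine ⟨-s, ?_, by ring⟩
      rintro ⟨r, hr⟩
      obtain ⟨d, hd⟩ := hsq
      have hd0 : d ≠ 0 := by
        rintro rfl
        rw [mul_zero] at hd
        exact hs hd
      apply hns
      refine ⟨r * d⁻¹, ?_⟩
      field_simp
      linear_combination hd + hr
    · exact ⟨s, hsq, rfl⟩
  have hcirc : c * c + t * t + 1 = 0 := by
    rw [hcc]
    linear_combination hst
  set a : ℤ := (c.val : ℤ) with ha
  set t₀ : ℤ := (t.val : ℤ) with ht₀
  have hac : ((a : ℤ) : ZMod p) = c := cast_val_int c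
  have hat : ((t₀ : ℤ) : ZMod p) = t := cast_val_int t
  have hA₀ : (p : ℤ) ∣ (a ^ 2 + t₀ ^ 2 + 1) := by
    rw [← ZMod.intCast_zmod_eq_zero_iff_dvd]
    push_cast
    rw [hac, hat]
    linear_combination hcirc
  have ht2 : ¬ ((p : ℤ) ∣ 2 * t₀) := by
    intro hd
    have : ((2 * t₀ : ℤ) : ZMod p) = 0 := (ZMod.intCast_zmod_eq_zero_iff_dvd _ p).mpr hd
    push_cast at this
    rw [hat] at this
    rcases mul_eq_zero.mp this with h1 | h1
    · exact two_ne_zero_zmod hp2 h1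
    · exact ht h1
  by_cases hpA : (p : ℤ) ^ 2 ∣ (a ^ 2 + t₀ ^ 2 + 1)
  · refine ⟨a, t₀ + p, ?_, ?_, ?_⟩
    · have : a ^ 2 + (t₀ + p) ^ 2 + 1 = (a ^ 2 + t₀ ^ 2 + 1) + p * (2 * t₀ + p) := by ring
      rw [this]
      exact dvd_add hA₀ (Dvd.intro _ rfl)
    · intro hd
      apply ht2
      have hp0 : (p : ℤ) ≠ 0 := Int.natCast_ne_zero.mpr (Fact.out : p.Prime).ne_zero
      have h1 : (p : ℤ) ^ 2 ∣ p * (2 * t₀) + p * p := by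
        have : p * (2 * t₀) + p * p = (a ^ 2 + (t₀ + p) ^ 2 + 1) - (a ^ 2 + t₀ ^ 2 + 1) := by
          ring
        rw [this]
        exact dvd_sub hd hpA
      have hpp : (p : ℤ) ^ 2 ∣ (p : ℤ) * p := ⟨1, by ring⟩
      have h4 : (p : ℤ) ^ 2 ∣ (p : ℤ) * (2 * t₀) := by
        have := dvd_sub h1 hpp
        simpa using this
      obtain ⟨k, hk⟩ := h4
      refine ⟨k, mul_left_cancel₀ hp0 ?_⟩
      rw [hk]
      ring
    · have hcast : ((a ^ 2 + (t₀ + p) ^ 2 + 1 + a : ℤ) : ZMod p) = c := by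
        push_cast
        rw [hac, hat, ZMod.natCast_self]
        linear_combination hcirc
      rw [hcast]
      exact hcsq
  · refine ⟨a, t₀, hA₀, hpA, ?_⟩
    have hcast : ((a ^ 2 + t₀ ^ 2 + 1 + a : ℤ) : ZMod p) = c := by
      push_cast
      rw [hac, hat]
      linear_combination hcirc
    rw [hcast]
    exact hcsq
lemma construct1 (hp : p % 4 = 1) :
    ∃ a b A₁ B₁ : ℤ, a ^ 2 + b ^ 2 + 1 = p * A₁ ∧ a ^ 2 + b ^ 2 + 1 + a = p * B₁ ∧
      ¬ IsSquare ((-(A₁ * B₁) : ZMod p)) := by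
  have hp2 : p ≠ 2 := by omega
  obtain ⟨i, hi⟩ : IsSquare (-1 : ZMod p) := ZMod.exists_sq_eq_neg_one_iff.mpr (by omega)
  have hi0 : i ≠ 0 := by
    rintro rfl
    rw [mul_zero, neg_eq_zero] at hi
    exact one_ne_zero hi
  have h2 : (2 : ZMod p) ≠ 0 := two_ne_zero_zmod hp2
  have h2i : (2 : ZMod p) * i ≠ 0 := mul_ne_zero h2 hi0
  obtain ⟨g, hg⟩ := FiniteField.exists_nonsquare (F := ZMod p)
    (by rw [ZMod.ringChar_zmod_n]; exact hp2)
  set i₀ : ℤ := (i.val : ℤ) with hi₀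
  have hii : ((i₀ : ℤ) : ZMod p) = i := cast_val_int i
  have hdvd : (p : ℤ) ∣ (i₀ ^ 2 + 1) := by
    rw [← ZMod.intCast_zmod_eq_zero_iff_dvd]
    push_cast
    rw [hii]
    linear_combination -hi
  obtain ⟨cc, hcc⟩ := hdvd
  set β : ℤ := (((1 - (cc : ZMod p)) * ((2 : ZMod p) * i)⁻¹).val : ℤ) with hβdef
  have hβ : ((β : ℤ) : ZMod p) = (1 - (cc : ZMod p)) * ((2 : ZMod p) * i)⁻¹ :=
    cast_val_int _
  set α : ℤ := ((- g - 1 : ZMod p).val : ℤ) with hαdef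
  have hα : ((α : ℤ) : ZMod p) = - g - 1 := cast_val_int _
  refine ⟨p * α, i₀ + p * β, cc + 2 * i₀ * β + p * (α ^ 2 + β ^ 2),
    cc + 2 * i₀ * β + p * (α ^ 2 + β ^ 2) + α, ?_, ?_, ?_⟩
  · linear_combination hcc
  · linear_combination hcc
  · have hinv : ((2 : ZMod p) * i) * ((2 : ZMod p) * i)⁻¹ = 1 := mul_inv_cancel₀ h2i
    have hA1 : ((cc + 2 * i₀ * β + p * (α ^ 2 + β ^ 2) : ℤ) : ZMod p) = 1 := by
      push_cast
      rw [ZMod.natCast_self, hii, hβ]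
      linear_combination (1 - (cc : ZMod p)) * hinv
    have hB1 : ((cc + 2 * i₀ * β + p * (α ^ 2 + β ^ 2) + α : ℤ) : ZMod p) = -g := by
      push_cast
      rw [ZMod.natCast_self, hii, hβ, hα]
      linear_combination (1 - (cc : ZMod p)) * hinv
    rw [hA1, hB1]
    simpa using hg

/-- For every prime `p` there exist rationals `a, b` such that the quaternion
algebra `H_{a²+b²+1, a²+a+1+b²}` is ramified at `p`, i.e. the form
`z² - (a²+b²+1) x² - (a²+a+1+b²) y²` is anisotropic over `ℚ_p`. -/
theorem exists_rationals_special_ramified (p : ℕ) [Fact p.Prime] :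
    ∃ a b : ℚ,
      ∀ x y z : ℚ_[p],
        z ^ 2 = ((a ^ 2 + b ^ 2 + 1 : ℚ) : ℚ_[p]) * x ^ 2 +
            ((a ^ 2 + a + 1 + b ^ 2 : ℚ) : ℚ_[p]) * y ^ 2 →
          x = 0 ∧ y = 0 ∧ z = 0 := by
  rcases eq_or_ne p 2 with rfl | hp2
  · refine ⟨1, 0, ?_⟩
    intro x y z h
    apply descent_rat (p := 2) 2 3 step_p2 x y z
    have e1 : (((1:ℚ) ^ 2 + (0:ℚ) ^ 2 + 1 : ℚ) : ℚ_[2]) = ((2 : ℤ) : ℚ_[2]) := by norm_num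
    have e2 : (((1:ℚ) ^ 2 + (1:ℚ) + 1 + (0:ℚ) ^ 2 : ℚ) : ℚ_[2]) = ((3 : ℤ) : ℚ_[2]) := by
      norm_num
    rw [e1, e2] at h
    exact h
  · have hodd : p % 2 = 1 := (Fact.out : p.Prime).eq_two_or_odd.resolve_left hp2
    have h4 : p % 4 = 1 ∨ p % 4 = 3 := by omega
    rcases h4 with h4 | h4
    · obtain ⟨a, b, A₁, B₁, hA, hB, hns⟩ := construct1 h4
      refine ⟨(a : ℚ), (b : ℚ), ?_⟩
      intro x y z h
      apply descent_rat (a ^ 2 + b ^ 2 + 1) (a ^ 2 + b ^ 2 + 1 + a)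
        (step2 _ _ _ _ hA hB hns) x y z
      push_cast at h ⊢
      linear_combination h
    · obtain ⟨a, b, h1, h2', h3⟩ := construct3 h4
      refine ⟨(a : ℚ), (b : ℚ), ?_⟩
      intro x y z h
      apply descent_rat (a ^ 2 + b ^ 2 + 1) (a ^ 2 + b ^ 2 + 1 + a)
        (step1 _ _ h1 h2' h3) x y z
      push_cast at h ⊢
      linear_combination h
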